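/- Let j = exp(2πi/3) and define the 3×3 complex matrices Q₁ = [[0,1,0],[0,0,j],[j²,0,0]], Q₂ = [[0,j,0],[0,0,1],[j²,0,0]], Q₃ = [[0,1,0],[0,0,1],[1,0,0]]. Then for all a, b, c ∈ {1,2,3}: Qₐ·Q_b·Q_c + Q_b·Q_c·Qₐ + Q_c·Qₐ·Q_b = 3·η_{abc}·I₃, where η_{111} = η_{222} = η_{333} = 1, η_{123} = η_{231} = η_{312} = 1, η_{213} = η_{321} = η_{132} = j², and all other components η_{abc} are zero. -/

import Mathlib

open Matrix

/-- The primitive cube root of unity `j = exp(2πi/3)`. -/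
noncomputable def jRoot : ℂ := Complex.exp (2 * Real.pi * Complex.I / 3)

lemma jcube : jRoot ^ 3 = 1 := by
  rw [jRoot, ← Complex.exp_nat_mul]
  rw [show (3:ℕ) * (2 * ↑Real.pi * Complex.I / 3) = 2 * ↑Real.pi * Complex.I by push_cast; ring]
  exact Complex.exp_two_pi_mul_I

lemma jne : jRoot ≠ 1 := by
  rw [Ne, jRoot, Complex.exp_eq_one_iff]
  rintro ⟨n, hn⟩
  have h2 : (2 * ↑Real.pi * Complex.I : ℂ) ≠ 0 := by
    simp [Real.pi_ne_zero, Complex.I_ne_zero]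
  have h3 : (1 : ℂ) = (n : ℂ) * 3 := by
    field_simp at hn
    linear_combination hn
  have : (1 : ℤ) = n * 3 := by exact_mod_cast h3
  omega

lemma jsum : jRoot ^ 2 = -1 - jRoot := by
  have : (jRoot - 1) * (jRoot ^ 2 + jRoot + 1) = 0 := by linear_combination jcube
  rcases mul_eq_zero.1 this with h1 | h2
  · exact absurd (sub_eq_zero.1 h1) jne
  · linear_combination h2

/-- The three generators of the ternary Clifford algebra (indices 1,2,3
rendered as `0,1,2 : Fin 3`). -/
noncomputable def Q : Fin 3 → Matrix (Fin 3) (Fin 3) ℂ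
  | 0 => !![0, 1, 0; 0, 0, jRoot; jRoot ^ 2, 0, 0]
  | 1 => !![0, jRoot, 0; 0, 0, 1; jRoot ^ 2, 0, 0]
  | 2 => !![0, 1, 0; 0, 0, 1; 1, 0, 0]

/-- The symbol `η_{abc}`: `1` on the diagonal, `1` on even permutations of
`(1,2,3)`, `j²` on odd permutations, and `0` otherwise. -/
noncomputable def ηsym : Fin 3 → Fin 3 → Fin 3 → ℂ := fun a b c =>
  if a = b ∧ b = c then 1
  else if (a, b, c) = (0, 1, 2) ∨ (a, b, c) = (1, 2, 0) ∨ (a, b, c) = (2, 0, 1) then 1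
  else if (a, b, c) = (1, 0, 2) ∨ (a, b, c) = (2, 1, 0) ∨ (a, b, c) = (0, 2, 1) then jRoot ^ 2
  else 0

set_option maxHeartbeats 2000000 in
/-- The ternary Clifford algebra relation: the cyclic ternary anticommutator of
the matrices `Q₁, Q₂, Q₃` equals `3·η_{abc}·𝟙`. -/
theorem ternary_clifford (a b c : Fin 3) :
    Q a * Q b * Q c + Q b * Q c * Q a + Q c * Q a * Q b =
      (3 * ηsym a b c) • (1 : Matrix (Fin 3) (Fin 3) ℂ) := by
  have h4 : jRoot ^ 4 = jRoot := by linear_combination jRoot * jcube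
  have h5 : jRoot ^ 5 = -1 - jRoot := by linear_combination jRoot ^ 2 * jcube + jsum
  have h6 : jRoot ^ 6 = 1 := by linear_combination (jRoot ^ 3 + 1) * jcube
  fin_cases a <;> fin_cases b <;> fin_cases c <;>
    simp only [Q, ηsym, Matrix.mul_fin_three, Matrix.one_fin_three, Matrix.smul_of,
      Matrix.smul_cons, smul_eq_mul, Matrix.smul_empty, Matrix.of_add_of, Matrix.add_cons,
      Matrix.head_cons, Matrix.tail_cons, Matrix.empty_add_empty, Prod.mk.injEq, if_true,
      if_false, and_self, and_true, true_and] <;>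
    norm_num [Fin.ext_iff, Prod.ext_iff] <;>
    (repeat' apply And.intro) <;>
      ring_nf <;> simp only [jsum, jcube, h4, h5, h6] <;> ring_nf
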